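/- Let $\delta \in (0,1]$ and let $\y_1,\dots,\y_q \in \mathbb{R}^d$ be unit vectors with $q \le d$ such that for each $i$, the orthogonal projection of $\y_i$ onto the span of $\y_1,\dots,\y_{i-1}$ has norm at most $1-\delta$. Then there exist $\lfloor q/2 \rfloor$ orthonormal vectors $\vec{m}_1,\dots,\vec{m}_{\lfloor q/2\rfloor}$ such that for every $\vec{a} \in \mathbb{R}^d$, $\max_i |\vec{m}_i^\top \vec{a}| \le (d/\delta) \max_j |\y_j^\top \vec{a}|$. -/

import Mathlib

open EuclideanSpace Submodule InnerProductSpace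
open scoped Matrix

instance auxAlgWF (q : ℕ) : WellFoundedLT (Fin q) := inferInstance

lemma aux_gs_norm {d q : ℕ} (δ : ℝ) (hδ0 : 0 < δ)
    (y : Fin q → EuclideanSpace ℝ (Fin d))
    (hnorm : ∀ i, ‖y i‖ = 1)
    (hproj : ∀ i : Fin q,
      ‖(orthogonalProjection (Submodule.span ℝ (y '' {j | (j : ℕ) < (i : ℕ)})) (y i) :
        EuclideanSpace ℝ (Fin d))‖ ≤ 1 - δ)
    (i : Fin q) : δ ≤ ‖gramSchmidt ℝ y i‖ ^ 2 := by
  set g := gramSchmidt ℝ y with hg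
  have hpmem : y i - g i ∈ span ℝ (gramSchmidt ℝ y '' Set.Iio i) := by
    have h1 : y i - g i = ∑ j ∈ Finset.Iio i,
        (orthogonalProjection (ℝ ∙ gramSchmidt ℝ y j) (y i) : EuclideanSpace ℝ (Fin d)) := by
      rw [hg, gramSchmidt_def ℝ y i]; abel
    rw [h1]
    refine Submodule.sum_mem _ fun j hj => ?_
    have : (ℝ ∙ gramSchmidt ℝ y j) ≤ span ℝ (gramSchmidt ℝ y '' Set.Iio i) := by
      rw [Submodule.span_singleton_le_iff_mem]
      exact Submodule.subset_span (Set.mem_image_of_mem _ (Finset.mem_Iio.mp hj))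
    exact this (SetLike.coe_mem _)
  have hgo : g i ∈ (span ℝ (gramSchmidt ℝ y '' Set.Iio i))ᗮ := by
    rw [Submodule.mem_orthogonal]
    intro u hu
    induction hu using Submodule.span_induction with
    | mem x hx =>
      obtain ⟨j, hj, rfl⟩ := hx
      exact gramSchmidt_orthogonal ℝ y (ne_of_lt hj)
    | zero => exact inner_zero_left _
    | add u v _ _ h1 h2 => rw [inner_add_left, h1, h2, add_zero]
    | smul c u _ h1 => rw [inner_smul_left, h1, mul_zero]
  have hVeq : span ℝ (gramSchmidt ℝ y '' Set.Iio i) = span ℝ (y '' {j | (j : ℕ) < (i : ℕ)}) := by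
    rw [span_gramSchmidt_Iio ℝ y i]
    rfl
  rw [hVeq] at hpmem hgo
  have hproj_eq : (orthogonalProjection (span ℝ (y '' {j | (j : ℕ) < (i : ℕ)})) (y i) :
      EuclideanSpace ℝ (Fin d)) = y i - g i := by
    refine eq_starProjection_of_mem_orthogonal hpmem ?_
    simpa using hgo
  have hp := hproj i
  rw [hproj_eq] at hp
  have hnn : (0:ℝ) ≤ ‖y i - g i‖ := norm_nonneg _
  have hinner : ⟪g i, y i - g i⟫_ℝ = 0 :=
    Submodule.inner_left_of_mem_orthogonal hpmem hgo
  have hsum : ‖y i‖ ^ 2 = ‖g i‖ ^ 2 + ‖y i - g i‖ ^ 2 := by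
    have h2 := norm_add_sq_real (g i) (y i - g i)
    rw [hinner] at h2
    have h3 : g i + (y i - g i) = y i := by abel
    rw [h3] at h2
    linarith
  rw [hnorm i] at hsum
  nlinarith

lemma aux_det {d q : ℕ} (δ : ℝ) (hδ0 : 0 < δ)
    (y : Fin q → EuclideanSpace ℝ (Fin d))
    (hgs : ∀ i, δ ≤ ‖gramSchmidt ℝ y i‖ ^ 2) :
    δ ^ q ≤ (Matrix.of fun j l => (⟪y j, y l⟫_ℝ)).det := by
  classical
  set g := gramSchmidt ℝ y with hgdef
  have hne : ∀ i, (‖g i‖ ^ 2 : ℝ) ≠ 0 := fun i => (lt_of_lt_of_le hδ0 (hgs i)).ne'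
  set c : Fin q → Fin q → ℝ := fun j i => (⟪g i, y j⟫_ℝ) / ‖g i‖ ^ 2 with hc
  have hctri : ∀ j i : Fin q, j < i → c j i = 0 := by
    intro j i hji
    have h0 : c j i = (⟪g i, y j⟫_ℝ) / ‖g i‖ ^ 2 := rfl
    rw [h0, gramSchmidt_inv_triangular ℝ y hji, zero_div]
  have hinner_diag : ∀ j, (⟪g j, y j⟫_ℝ) = ‖g j‖ ^ 2 := by
    intro j
    conv_lhs => rw [gramSchmidt_def' ℝ y j]
    rw [inner_add_right, real_inner_self_eq_norm_sq]
    have hz : ∀ i ∈ Finset.Iio j, (⟪g j,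
        (ℝ ∙ g i).starProjection (y j)⟫_ℝ) = 0 := by
      intro i hi
      rw [starProjection_singleton, real_inner_smul_right,
        gramSchmidt_orthogonal ℝ y (Finset.mem_Iio.mp hi).ne', mul_zero]
    rw [inner_sum, Finset.sum_eq_zero hz, add_zero]
  have hcdiag : ∀ j, c j j = 1 := fun j => by
    have h0 : c j j = (⟪g j, y j⟫_ℝ) / ‖g j‖ ^ 2 := rfl
    rw [h0, hinner_diag j, div_self (hne j)]
  have hexp : ∀ j, y j = ∑ i, c j i • g i := by
    intro j
    rw [← Finset.sum_subset (Finset.subset_univ (Finset.Iic j))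
      (fun i _ hi => by rw [hctri j i (by simpa using hi), zero_smul])]
    rw [← Finset.Iio_insert, Finset.sum_insert (by simp), hcdiag, one_smul]
    conv_lhs => rw [gramSchmidt_def'' ℝ y j]
    simp [hc, hgdef, RCLike.ofReal_real_eq_id]
  have h1 : ∀ j l, (⟪y j, y l⟫_ℝ) = ∑ i, c j i * c l i * ‖g i‖ ^ 2 := by
    intro j l
    conv_lhs => rw [hexp j, hexp l]
    rw [sum_inner]
    refine Finset.sum_congr rfl fun i _ => ?_
    rw [real_inner_smul_left, inner_sum,
      Finset.sum_eq_single i (fun k _ hk => by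
        rw [real_inner_smul_right, gramSchmidt_orthogonal ℝ y (Ne.symm hk), mul_zero])
      (by simp), real_inner_smul_right, real_inner_self_eq_norm_sq]
    ring
  have hGf : (Matrix.of fun j l => (⟪y j, y l⟫_ℝ))
      = Matrix.of c * Matrix.diagonal (fun i => ‖g i‖ ^ 2) * (Matrix.of c)ᵀ := by
    ext j l
    simp only [Matrix.of_apply, Matrix.mul_apply, Matrix.transpose_apply,
      Matrix.diagonal_apply, Matrix.of_apply, mul_ite, mul_zero,
      Finset.sum_ite_eq', Finset.mem_univ, if_true]
    rw [h1 j l]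
    refine Finset.sum_congr rfl fun i _ => by ring
  have hdetC : (Matrix.of c).det = 1 := by
    rw [Matrix.det_of_lowerTriangular (Matrix.of c)
      (fun i j hij => hctri i j (by exact hij))]
    simp [hcdiag]
  have hdet : (Matrix.of fun j l => (⟪y j, y l⟫_ℝ)).det = ∏ i, ‖g i‖ ^ 2 := by
    rw [hGf, Matrix.det_mul, Matrix.det_mul, Matrix.det_transpose, hdetC,
      Matrix.det_diagonal, one_mul, mul_one]
  rw [hdet]
  calc δ ^ q = ∏ _i : Fin q, δ := by rw [Finset.prod_const, Finset.card_univ, Fintype.card_fin]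
  _ ≤ ∏ i, ‖g i‖ ^ 2 := Finset.prod_le_prod (fun _ _ => hδ0.le) (fun i _ => hgs i)

/-- Lemma `algebrahelper` (Lemma 17 of the paper): from `q ≤ d` robustly linearly
independent unit vectors one can extract `⌊q/2⌋` orthonormal vectors `m` such that
`|⟪m i, a⟫| ≤ (d/δ) * sup_j |⟪y j, a⟫|` for all `a`. -/
theorem stmt_0 (d q : ℕ) (hq : q ≤ d) (δ : ℝ) (hδ0 : 0 < δ) (hδ1 : δ ≤ 1)
    (y : Fin q → EuclideanSpace ℝ (Fin d))
    (hnorm : ∀ i, ‖y i‖ = 1)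
    (hproj : ∀ i : Fin q,
      ‖(orthogonalProjection (Submodule.span ℝ (y '' {j | (j : ℕ) < (i : ℕ)})) (y i) :
        EuclideanSpace ℝ (Fin d))‖ ≤ 1 - δ) :
    ∃ m : Fin (q / 2) → EuclideanSpace ℝ (Fin d),
      Orthonormal ℝ m ∧
      ∀ a : EuclideanSpace ℝ (Fin d), ∀ i : Fin (q / 2),
        |(⟪m i, a⟫_ℝ)| ≤ ((d : ℝ) / δ) * ⨆ j : Fin q, |(⟪y j, a⟫_ℝ)| := by
  classical
  rcases Nat.eq_zero_or_pos (q / 2) with hk0 | hkpos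
  · haveI : IsEmpty (Fin (q / 2)) := by rw [hk0]; infer_instance
    exact ⟨fun _ => 0, ⟨fun i => isEmptyElim i, fun i => isEmptyElim i⟩,
      fun a i => isEmptyElim i⟩
  have hq2 : 2 ≤ q := by omega
  have hq1 : (1:ℝ) ≤ q := by exact_mod_cast Nat.one_le_of_lt hq2
  have hqpos : (0:ℝ) < q := by linarith
  set G : Matrix (Fin q) (Fin q) ℝ := Matrix.of fun j l => (⟪y j, y l⟫_ℝ) with hGdef
  have hherm : G.IsHermitian := by
    ext j l
    simp only [hGdef, Matrix.conjTranspose_apply, Matrix.of_apply, star_trivial]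
    exact real_inner_comm _ _
  set lam : Fin q → ℝ := hherm.eigenvalues with hlamdef
  set u : Fin q → Fin q → ℝ := fun β j => hherm.eigenvectorBasis β j with hudef
  set w : Fin q → EuclideanSpace ℝ (Fin d) := fun β => ∑ j, u β j • y j with hwdef
  -- inner products of linear combinations
  have h1 : ∀ (x z : Fin q → ℝ),
      ⟪∑ j, x j • y j, ∑ l, z l • y l⟫_ℝ = dotProduct x (G *ᵥ z) := by
    intro x z
    rw [hGdef]
    simp only [dotProduct, Matrix.mulVec, Matrix.of_apply, sum_inner, inner_sum,
      real_inner_smul_left, real_inner_smul_right]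
    rw [Finset.sum_comm]
    refine Finset.sum_congr rfl fun j _ => ?_
    rw [Finset.mul_sum]
    exact Finset.sum_congr rfl fun l _ => by ring
  -- PSD
  have hpsd : G.PosSemidef := by
    refine Matrix.posSemidef_iff_dotProduct_mulVec.mpr ⟨hherm, fun x => ?_⟩
    rw [star_trivial, ← h1 x x]
    exact real_inner_self_nonneg
  have hlam_nonneg : ∀ β, 0 ≤ lam β := hpsd.eigenvalues_nonneg
  -- the key inner product computation
  have hww : ∀ β γ, (⟪w β, w γ⟫_ℝ) = if β = γ then lam γ else 0 := by
    intro β γ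
    have hGu : G *ᵥ (u γ) = fun j => lam γ * u γ j := by
      have h := hherm.mulVec_eigenvectorBasis γ
      funext j
      exact congrFun h j
    have hinner : (⟪hherm.eigenvectorBasis β, hherm.eigenvectorBasis γ⟫_ℝ)
        = ∑ j, u β j * u γ j := by
      simp [PiLp.inner_apply, RCLike.inner_apply, starRingEnd_apply, hudef]
      exact Finset.sum_congr rfl fun _ _ => mul_comm _ _
    rw [hwdef]
    simp only
    rw [h1, hGu]
    simp only [dotProduct]
    rw [show ∑ j, u β j * (lam γ * u γ j) = lam γ * ∑ j, u β j * u γ j by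
      rw [Finset.mul_sum]; exact Finset.sum_congr rfl fun l _ => by ring]
    rw [← hinner, orthonormal_iff_ite.mp hherm.eigenvectorBasis.orthonormal β γ]
    by_cases h : β = γ <;> simp [h]
  -- ℓ¹ bound on eigenvector coordinates
  have hul2 : ∀ β, ∑ j, u β j ^ 2 = 1 := by
    intro β
    have h := hherm.eigenvectorBasis.orthonormal.1 β
    have h2 : (⟪hherm.eigenvectorBasis β, hherm.eigenvectorBasis β⟫_ℝ) = 1 := by
      rw [real_inner_self_eq_norm_sq, h, one_pow]
    rw [← h2, PiLp.inner_apply]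
    simp [PiLp.inner_apply, RCLike.inner_apply, starRingEnd_apply, hudef, pow_two]
  have hul1sq : ∀ β, (∑ j, |u β j|) ^ 2 ≤ q := by
    intro β
    have h := Finset.sum_mul_sq_le_sq_mul_sq Finset.univ (fun j => |u β j|) (fun _ => (1:ℝ))
    simp only [mul_one, one_pow, sq_abs] at h
    calc (∑ j, |u β j|) ^ 2 ≤ (∑ j, u β j ^ 2) * ∑ _j : Fin q, (1:ℝ) := h
      _ = q := by rw [hul2 β, Finset.sum_const, Finset.card_univ, Fintype.card_fin]; simp
  have hul1 : ∀ β, (∑ j, |u β j|) ≤ Real.sqrt q := by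
    intro β
    have h := hul1sq β
    have hnn : 0 ≤ ∑ j, |u β j| := Finset.sum_nonneg fun j _ => abs_nonneg _
    rw [show Real.sqrt q = Real.sqrt q from rfl]
    nlinarith [Real.sq_sqrt hqpos.le, Real.sqrt_nonneg (q:ℝ),
      sq_nonneg (∑ j, |u β j| - Real.sqrt q)]
  -- eigenvalue upper bound
  have hlam_le : ∀ β, lam β ≤ q := by
    intro β
    have hw2 : lam β = ‖w β‖ ^ 2 := by
      rw [← real_inner_self_eq_norm_sq, hww β β, if_pos rfl]
    have hwle : ‖w β‖ ≤ ∑ j, |u β j| := by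
      rw [hwdef]
      refine le_trans (norm_sum_le _ _) ?_
      refine Finset.sum_le_sum fun j _ => ?_
      rw [norm_smul, hnorm j, mul_one]
      exact le_of_eq (Real.norm_eq_abs _)
    have h2 : ‖w β‖ ^ 2 ≤ (∑ j, |u β j|) ^ 2 := by
      have := norm_nonneg (w β)
      nlinarith
    calc lam β = ‖w β‖ ^ 2 := hw2
      _ ≤ (∑ j, |u β j|) ^ 2 := h2
      _ ≤ q := hul1sq β
  -- determinant lower bound
  have hdetG : δ ^ q ≤ G.det := aux_det δ hδ0 y (aux_gs_norm δ hδ0 y hnorm hproj)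
  have hdet_eigen : G.det = ∏ β, lam β := by
    have h := hherm.det_eq_prod_eigenvalues
    simpa [hlamdef] using h
  -- counting: many eigenvalues are large
  set t : ℝ := δ ^ 2 / q with htdef
  have htpos : 0 < t := by positivity
  set S : Finset (Fin q) := Finset.univ.filter (fun β => t ≤ lam β) with hSdef
  have hScard : q / 2 ≤ S.card := by
    by_contra hlt
    push_neg at hlt
    set s := S.card with hsdef
    have hsle : 2 * s + 2 ≤ q := by omega
    set e := q - 2 * s with hedef
    have he2 : 2 ≤ e := by omega
    have hqs : q - s = s + e := by omega
    have hqs2 : 2 * (q - s) = q + e := by omega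
    have hcompl : Sᶜ.card = q - s := by
      rw [Finset.card_compl, Fintype.card_fin]
    have hprod : ∏ β, lam β = (∏ β ∈ S, lam β) * ∏ β ∈ Sᶜ, lam β := by
      rw [Finset.prod_mul_prod_compl]
    have hS_le : ∏ β ∈ S, lam β ≤ (q:ℝ) ^ s := by
      calc ∏ β ∈ S, lam β ≤ ∏ β ∈ S, (q:ℝ) :=
          Finset.prod_le_prod (fun β _ => hlam_nonneg β) (fun β _ => hlam_le β)
        _ = (q:ℝ) ^ s := by rw [Finset.prod_const]
    have hSc_le : ∏ β ∈ Sᶜ, lam β ≤ t ^ (q - s) := by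
      calc ∏ β ∈ Sᶜ, lam β ≤ ∏ β ∈ Sᶜ, t := by
            refine Finset.prod_le_prod (fun β _ => hlam_nonneg β) (fun β hβ => ?_)
            have : β ∉ S := Finset.mem_compl.mp hβ
            rw [hSdef, Finset.mem_filter] at this
            push_neg at this
            exact (this (Finset.mem_univ β)).le
        _ = t ^ (q - s) := by rw [Finset.prod_const, hcompl]
    have hchain : δ ^ q ≤ (q:ℝ) ^ s * t ^ (q - s) := by
      calc δ ^ q ≤ G.det := hdetG
        _ = ∏ β, lam β := hdet_eigen
        _ = (∏ β ∈ S, lam β) * ∏ β ∈ Sᶜ, lam β := hprod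
        _ ≤ (q:ℝ) ^ s * t ^ (q - s) := by
            refine mul_le_mul hS_le hSc_le (Finset.prod_nonneg fun β _ => hlam_nonneg β) ?_
            positivity
    -- now derive contradiction
    have ht_pow : t ^ (q - s) = δ ^ (2 * (q - s)) / (q:ℝ) ^ (q - s) := by
      rw [htdef, div_pow, pow_mul]
    have hmain : δ ^ q * (q:ℝ) ^ (q - s) ≤ (q:ℝ) ^ s * δ ^ (2 * (q - s)) := by
      rw [ht_pow, ← mul_div_assoc] at hchain
      exact (le_div_iff₀ (by positivity)).mp hchain
    rw [hqs2, hqs, pow_add, pow_add] at hmain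
    have hA : (0:ℝ) < δ ^ q * (q:ℝ) ^ s := by positivity
    have h2 : (δ ^ q * (q:ℝ) ^ s) * (q:ℝ) ^ e ≤ (δ ^ q * (q:ℝ) ^ s) * δ ^ e := by
      calc (δ ^ q * (q:ℝ) ^ s) * (q:ℝ) ^ e = δ ^ q * ((q:ℝ) ^ s * (q:ℝ) ^ e) := by ring
        _ ≤ (q:ℝ) ^ s * (δ ^ q * δ ^ e) := hmain
        _ = (δ ^ q * (q:ℝ) ^ s) * δ ^ e := by ring
    have h3 : (q:ℝ) ^ e ≤ δ ^ e := le_of_mul_le_mul_left h2 hA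
    have h4 : δ ^ e ≤ 1 := pow_le_one₀ hδ0.le hδ1
    have h5 : (2:ℝ) ≤ (q:ℝ) := by exact_mod_cast hq2
    have h6 : (2:ℝ) ^ e ≤ (q:ℝ) ^ e := pow_le_pow_left₀ (by norm_num) h5 e
    have h7 : (2:ℝ) ≤ (2:ℝ) ^ e := by
      calc (2:ℝ) = 2 ^ 1 := (pow_one 2).symm
        _ ≤ 2 ^ e := pow_le_pow_right₀ (by norm_num) (by omega)
    linarith
  -- select q/2 large eigenvalues
  obtain ⟨T, hTS, hTcard⟩ := Finset.exists_subset_card_eq hScard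
  set σ : Fin (q / 2) → Fin q := fun i => (T.orderIsoOfFin hTcard i : Fin q) with hσdef
  have hσinj : Function.Injective σ := by
    intro i j hij
    exact (T.orderIsoOfFin hTcard).injective (Subtype.ext hij)
  have hσlam : ∀ i, t ≤ lam (σ i) := by
    intro i
    have hmem : σ i ∈ T := (T.orderIsoOfFin hTcard i).2
    have := hTS hmem
    rw [hSdef, Finset.mem_filter] at this
    exact this.2
  have hσpos : ∀ i, 0 < lam (σ i) := fun i => lt_of_lt_of_le htpos (hσlam i)
  -- define m
    -- m i = (sqrt (lam (σ i)))⁻¹ • w (σ i)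
  refine ⟨fun i => (Real.sqrt (lam (σ i)))⁻¹ • w (σ i), ?_, ?_⟩
  · rw [orthonormal_iff_ite]
    intro i j
    rw [real_inner_smul_left, real_inner_smul_right, hww]
    by_cases h : i = j
    · subst h
      rw [if_pos rfl, if_pos rfl]
      have hpos := hσpos i
      rw [← Real.sqrt_mul_self hpos.le]
      field_simp
      rw [Real.sq_sqrt (Real.sqrt_nonneg _)]
    · rw [if_neg h, if_neg (fun hc => h (hσinj hc))]
      simp
  · intro a i
    set M : ℝ := ⨆ j : Fin q, |(⟪y j, a⟫_ℝ)| with hMdef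
    have hbdd : BddAbove (Set.range fun j : Fin q => |(⟪y j, a⟫_ℝ)|) :=
      Set.Finite.bddAbove (Set.finite_range _)
    have hMle : ∀ j, |(⟪y j, a⟫_ℝ)| ≤ M := fun j => le_ciSup hbdd j
    have hM0 : 0 ≤ M := le_trans (abs_nonneg _) (hMle ⟨0, by omega⟩)
    have hwa : (⟪w (σ i), a⟫_ℝ) = ∑ j, u (σ i) j * (⟪y j, a⟫_ℝ) := by
      rw [hwdef]
      simp only [sum_inner, real_inner_smul_left]
    have habs : |(⟪w (σ i), a⟫_ℝ)| ≤ Real.sqrt q * M := by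
      rw [hwa]
      calc |∑ j, u (σ i) j * (⟪y j, a⟫_ℝ)| ≤ ∑ j, |u (σ i) j * (⟪y j, a⟫_ℝ)| :=
            Finset.abs_sum_le_sum_abs _ _
        _ = ∑ j, |u (σ i) j| * |(⟪y j, a⟫_ℝ)| := by
            refine Finset.sum_congr rfl fun j _ => abs_mul _ _
        _ ≤ ∑ j, |u (σ i) j| * M := by
            refine Finset.sum_le_sum fun j _ => ?_
            exact mul_le_mul_of_nonneg_left (hMle j) (abs_nonneg _)
        _ = (∑ j, |u (σ i) j|) * M := by rw [Finset.sum_mul]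
        _ ≤ Real.sqrt q * M := mul_le_mul_of_nonneg_right (hul1 (σ i)) hM0
    have hsqrt_lb : δ / Real.sqrt q ≤ Real.sqrt (lam (σ i)) := by
      have hs : Real.sqrt t ≤ Real.sqrt (lam (σ i)) := Real.sqrt_le_sqrt (hσlam i)
      have ht' : Real.sqrt t = δ / Real.sqrt q := by
        rw [htdef, Real.sqrt_div (sq_nonneg δ), Real.sqrt_sq hδ0.le]
      rw [← ht']
      exact hs
    have hsqrtqpos : (0:ℝ) < Real.sqrt q := Real.sqrt_pos.mpr hqpos
    have hinv_le : (Real.sqrt (lam (σ i)))⁻¹ ≤ Real.sqrt q / δ := by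
      have hpos : 0 < δ / Real.sqrt q := by positivity
      have := one_div_le_one_div_of_le hpos hsqrt_lb
      rw [one_div_div] at this
      rw [← one_div]
      exact this
    rw [real_inner_smul_left]
    rw [abs_mul, abs_of_nonneg (by positivity)]
    calc (Real.sqrt (lam (σ i)))⁻¹ * |(⟪w (σ i), a⟫_ℝ)|
        ≤ (Real.sqrt q / δ) * (Real.sqrt q * M) := by
          refine mul_le_mul hinv_le habs (abs_nonneg _) (by positivity)
      _ = (q / δ) * M := by
          rw [div_mul_eq_mul_div, ← mul_assoc, Real.mul_self_sqrt hqpos.le]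
          ring
      _ ≤ ((d:ℝ) / δ) * M := by
          refine mul_le_mul_of_nonneg_right ?_ hM0
          have hqd : (q:ℝ) ≤ d := by exact_mod_cast hq
          gcongr
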